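/- Let ℓ ≥ 3 be odd and let (C_R, C_B) be a bicolored cycle of length ℓ that contains two adjacent edges of different colors (one red, one blue) and two adjacent edges that are both red. Then there exists an integer s ≥ 1 such that (C_R, C_B) embeds into the blow-up T1^(s) or embeds into the blow-up T2^(s); that is, there is an injective map φ from {0, …, ℓ−1} to the vertex set of the blow-up mapping every red edge of the cycle to a red edge of the blow-up and every blue edge to a blue edge of the blow-up. -/
import Mathlib


open SimpleGraph Set

/-- The cycle of length `ℓ` on vertex set `ZMod ℓ`, with edges `{i, i+1}`. -/
def cycleG (ℓ : ℕ) : SimpleGraph (ZMod ℓ) :=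
  SimpleGraph.fromRel (fun u v => v = u + 1)

/-- Red part of the triangle `T1`: all three edges `{0,1}, {0,2}, {1,2}` are red. -/
def T1R : SimpleGraph (Fin 3) := ⊤

/-- Blue part of the triangle `T1`: only the edge `{0,1}` is blue. -/
def T1B : SimpleGraph (Fin 3) := SimpleGraph.fromRel (fun a b => a = 0 ∧ b = 1)

/-- Red part of the triangle `T2`: the edges `{0,1}` and `{0,2}` are red. -/
def T2R : SimpleGraph (Fin 3) :=
  SimpleGraph.fromRel (fun a b => (a = 0 ∧ b = 1) ∨ (a = 0 ∧ b = 2))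

/-- Blue part of the triangle `T2`: the edges `{0,1}` and `{1,2}` are blue. -/
def T2B : SimpleGraph (Fin 3) :=
  SimpleGraph.fromRel (fun a b => (a = 0 ∧ b = 1) ∨ (a = 1 ∧ b = 2))

noncomputable def ff (ℓ : ℕ) (w : ZMod ℓ) (b : Fin 3) (u : ZMod ℓ) : Fin 3 :=
  if (u - w).val = 0 then 2 else if (u - w).val % 2 = 1 then b else 1 - b

lemma ff_cases (ℓ : ℕ) (hℓ : 3 ≤ ℓ) (hodd : Odd ℓ) (w : ZMod ℓ) (b : Fin 3) (u : ZMod ℓ) :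
    (u = w ∧ ff ℓ w b u = 2 ∧ ff ℓ w b (u+1) = b) ∨
    (u + 1 = w ∧ ff ℓ w b u = 1 - b ∧ ff ℓ w b (u+1) = 2) ∨
    (ff ℓ w b u = b ∧ ff ℓ w b (u+1) = 1 - b) ∨
    (ff ℓ w b u = 1 - b ∧ ff ℓ w b (u+1) = b) := by
  haveI : NeZero ℓ := ⟨by omega⟩
  haveI : Fact (1 < ℓ) := ⟨by omega⟩
  have hk : (u - w).val < ℓ := ZMod.val_lt _
  have hk1 : (u + 1 - w).val = ((u - w).val + 1) % ℓ := by
    have e : u + 1 - w = (u - w) + 1 := by ring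
    rw [e, ZMod.val_add, ZMod.val_one]
  rcases eq_or_ne (u - w).val 0 with h0 | h0
  · left
    have hw : u = w := by
      have := (ZMod.val_eq_zero (u - w)).mp h0
      exact sub_eq_zero.mp this
    have h1 : (u + 1 - w).val = 1 := by
      rw [hk1, h0]; exact Nat.mod_eq_of_lt (by omega)
    refine ⟨hw, ?_, ?_⟩
    · simp [ff, h0]
    · simp [ff, h1]
  rcases eq_or_ne (u - w).val (ℓ - 1) with h1 | h1
  · right; left
    have h2 : (u + 1 - w).val = 0 := by
      rw [hk1, h1]
      have e : ℓ - 1 + 1 = ℓ := by omega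
      rw [e, Nat.mod_self]
    have hw : u + 1 = w := by
      have := (ZMod.val_eq_zero (u + 1 - w)).mp h2
      exact sub_eq_zero.mp this
    obtain ⟨m, hm⟩ := hodd
    have hpar : (u - w).val % 2 = 0 := by omega
    refine ⟨hw, ?_, ?_⟩
    · simp [ff, h0, hpar]
    · simp [ff, h2]
  · right; right
    have h2 : (u + 1 - w).val = (u - w).val + 1 := by
      rw [hk1]; exact Nat.mod_eq_of_lt (by omega)
    rcases Nat.mod_two_eq_zero_or_one (u - w).val with hp | hp
    · right
      constructor
      · simp [ff, h0, hp]
      · have : (u + 1 - w).val % 2 = 1 := by omega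
        have hne : (u + 1 - w).val ≠ 0 := by omega
        simp [ff, hne, this]
    · left
      constructor
      · simp [ff, h0, hp]
      · have : (u + 1 - w).val % 2 = 0 := by omega
        have hne : (u + 1 - w).val ≠ 0 := by omega
        simp [ff, hne, this]

lemma core (ℓ : ℕ) (hℓ : 3 ≤ ℓ) (hodd : Odd ℓ) (CR CB : SimpleGraph (ZMod ℓ))
    (hdisj : ∀ u v, ¬(CR.Adj u v ∧ CB.Adj u v))
    (hcyc : ∀ u v, CR.Adj u v ∨ CB.Adj u v → v = u + 1 ∨ u = v + 1)
    (w : ZMod ℓ) (b : Fin 3)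
    (hb : (b = 0 ∧ CR.Adj w (w+1) ∧ CB.Adj (w-1) w) ∨
          (b = 1 ∧ CB.Adj w (w+1) ∧ CR.Adj (w-1) w)) :
    (∀ u v, CR.Adj u v → T2R.Adj (ff ℓ w b u) (ff ℓ w b v)) ∧
    (∀ u v, CB.Adj u v → T2B.Adj (ff ℓ w b u) (ff ℓ w b v)) := by
  have hR : ∀ u, CR.Adj u (u+1) → T2R.Adj (ff ℓ w b u) (ff ℓ w b (u+1)) := by
    intro u h
    rcases ff_cases ℓ hℓ hodd w b u with ⟨hw, e1, e2⟩ | ⟨hw, e1, e2⟩ | ⟨e1, e2⟩ | ⟨e1, e2⟩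
    · rw [e1, e2]
      rcases hb with ⟨rfl, _, _⟩ | ⟨rfl, hB, _⟩
      · simp [T2R, SimpleGraph.fromRel_adj]
      · exact absurd ⟨hw ▸ h, hB⟩ (hdisj w (w+1))
    · rw [e1, e2]
      have h' : CR.Adj (w-1) w := by
        have : u = w - 1 := by rw [← hw]; ring
        rw [← this, ← hw] at *; exact h
      rcases hb with ⟨rfl, _, hB⟩ | ⟨rfl, _, _⟩
      · exact absurd ⟨h', hB⟩ (hdisj (w-1) w)
      · simp [T2R, SimpleGraph.fromRel_adj]
    · rw [e1, e2]
      rcases hb with ⟨rfl, _, _⟩ | ⟨rfl, _, _⟩ <;> simp [T2R, SimpleGraph.fromRel_adj]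
    · rw [e1, e2]
      rcases hb with ⟨rfl, _, _⟩ | ⟨rfl, _, _⟩ <;> simp [T2R, SimpleGraph.fromRel_adj]
  have hB : ∀ u, CB.Adj u (u+1) → T2B.Adj (ff ℓ w b u) (ff ℓ w b (u+1)) := by
    intro u h
    rcases ff_cases ℓ hℓ hodd w b u with ⟨hw, e1, e2⟩ | ⟨hw, e1, e2⟩ | ⟨e1, e2⟩ | ⟨e1, e2⟩
    · rw [e1, e2]
      rcases hb with ⟨rfl, hRw, _⟩ | ⟨rfl, _, _⟩
      · exact absurd ⟨hRw, hw ▸ h⟩ (hdisj w (w+1))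
      · simp [T2B, SimpleGraph.fromRel_adj]
    · rw [e1, e2]
      have h' : CB.Adj (w-1) w := by
        have : u = w - 1 := by rw [← hw]; ring
        rw [← this, ← hw] at *; exact h
      rcases hb with ⟨rfl, _, _⟩ | ⟨rfl, _, hRw⟩
      · simp [T2B, SimpleGraph.fromRel_adj]
      · exact absurd ⟨hRw, h'⟩ (hdisj (w-1) w)
    · rw [e1, e2]
      rcases hb with ⟨rfl, _, _⟩ | ⟨rfl, _, _⟩ <;> simp [T2B, SimpleGraph.fromRel_adj]
    · rw [e1, e2]
      rcases hb with ⟨rfl, _, _⟩ | ⟨rfl, _, _⟩ <;> simp [T2B, SimpleGraph.fromRel_adj]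
  constructor
  · intro u v h
    rcases hcyc u v (Or.inl h) with rfl | rfl
    · exact hR u h
    · exact (hR v h.symm).symm
  · intro u v h
    rcases hcyc u v (Or.inr h) with rfl | rfl
    · exact hB u h
    · exact (hB v h.symm).symm


/-- Any bicolored odd cycle having a pair of adjacent edges of different colors and a pair
of adjacent red edges embeds into a sufficiently large blow-up of `T1` or of `T2` (the
blow-up of a bicolored graph on `Fin 3` with `s` vertices per part has color-`X` graph
`X.comap Prod.fst` on `Fin 3 × Fin s`). -/
theorem odd_cycle_embeds_in_T1_or_T2_blowup (ℓ : ℕ) (hℓ : 3 ≤ ℓ) (hodd : Odd ℓ)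
    (CR CB : SimpleGraph (ZMod ℓ))
    (hdisj : ∀ u v, ¬(CR.Adj u v ∧ CB.Adj u v))
    (hunion : CR ⊔ CB = cycleG ℓ)
    (hRB : ∃ u : ZMod ℓ, (CR.Adj u (u+1) ∧ CB.Adj (u+1) (u+2)) ∨
      (CB.Adj u (u+1) ∧ CR.Adj (u+1) (u+2)))
    (hRR : ∃ u : ZMod ℓ, CR.Adj u (u+1) ∧ CR.Adj (u+1) (u+2)) :
    ∃ s : ℕ, 1 ≤ s ∧
      ((∃ φ : ZMod ℓ ↪ Fin 3 × Fin s,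
          (∀ u v, CR.Adj u v → (T1R.comap (Prod.fst : Fin 3 × Fin s → Fin 3)).Adj (φ u) (φ v)) ∧
          (∀ u v, CB.Adj u v → (T1B.comap (Prod.fst : Fin 3 × Fin s → Fin 3)).Adj (φ u) (φ v))) ∨
        (∃ φ : ZMod ℓ ↪ Fin 3 × Fin s,
          (∀ u v, CR.Adj u v → (T2R.comap (Prod.fst : Fin 3 × Fin s → Fin 3)).Adj (φ u) (φ v)) ∧
          (∀ u v, CB.Adj u v → (T2B.comap (Prod.fst : Fin 3 × Fin s → Fin 3)).Adj (φ u) (φ v)))) := by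
  haveI : NeZero ℓ := ⟨by omega⟩
  have hcyc : ∀ u v, CR.Adj u v ∨ CB.Adj u v → v = u + 1 ∨ u = v + 1 := by
    intro u v h
    have h2 : (cycleG ℓ).Adj u v := by
      rw [← hunion]; exact (SimpleGraph.sup_adj CR CB u v).mpr h
    rw [cycleG, SimpleGraph.fromRel_adj] at h2
    exact h2.2
  obtain ⟨u₀, hcase⟩ := hRB
  have hb : ∃ b : Fin 3,
      (b = 0 ∧ CR.Adj (u₀+1) (u₀+1+1) ∧ CB.Adj (u₀+1-1) (u₀+1)) ∨
      (b = 1 ∧ CB.Adj (u₀+1) (u₀+1+1) ∧ CR.Adj (u₀+1-1) (u₀+1)) := by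
    have e1 : u₀ + 1 - 1 = u₀ := by ring
    have e2 : u₀ + 1 + 1 = u₀ + 2 := by ring
    rw [e1, e2]
    rcases hcase with ⟨h1, h2⟩ | ⟨h1, h2⟩
    · exact ⟨1, Or.inr ⟨rfl, h2, h1⟩⟩
    · exact ⟨0, Or.inl ⟨rfl, h2, h1⟩⟩
  obtain ⟨b, hb⟩ := hb
  obtain ⟨hR, hB⟩ := core ℓ hℓ hodd CR CB hdisj hcyc (u₀+1) b hb
  refine ⟨ℓ, by omega, Or.inr ⟨⟨fun u => (ff ℓ (u₀+1) b u, ⟨u.val, ZMod.val_lt u⟩), ?_⟩, ?_, ?_⟩⟩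
  · intro a c h
    have : a.val = c.val := congrArg (fun p => (p.2 : Fin ℓ).val) h
    exact ZMod.val_injective ℓ this
  · intro u v h
    exact SimpleGraph.comap_adj.mpr (hR u v h)
  · intro u v h
    exact SimpleGraph.comap_adj.mpr (hB u v h)
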